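/- Let n ≥ 7 and let χ : E(K_n) → Z_3 be an edge-coloring such that there is an alternating 4-cycle C with the property that the complete graph on the vertices outside C is not monochromatic. Then there exist an alternating 4-cycle C', a vertex u ∈ V(C'), and two distinct vertices v, w ∉ V(C') such that χ(uv) ≠ χ(uw). -/
import Mathlib


open Finset

/-- The 4-cycle `uvwz` is alternating for the coloring `χ`. -/
def IsAltC4 {N : ℕ} (χ : Sym2 (Fin N) → ZMod 3) (u v w z : Fin N) : Prop :=
  ([u, v, w, z] : List (Fin N)).Nodup ∧
    χ s(u, v) + χ s(w, z) ≠ χ s(v, w) + χ s(z, u)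

/-- The complete graph on the vertices outside `{a, b, c, d}` is monochromatic. -/
def MonoOutside {N : ℕ} (χ : Sym2 (Fin N) → ZMod 3) (a b c d : Fin N) : Prop :=
  ∃ m : ZMod 3, ∀ x y : Fin N,
    x ≠ a → x ≠ b → x ≠ c → x ≠ d → y ≠ a → y ≠ b → y ≠ c → y ≠ d → x ≠ y →
      χ s(x, y) = m

lemma cherry {N : ℕ} (χ : Sym2 (Fin N) → ZMod 3) (P : Fin N → Prop)
    (x0 y0 x1 y1 : Fin N) (h0 : P x0) (h0' : P y0) (h1 : P x1) (h1' : P y1)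
    (hxy0 : x0 ≠ y0) (hxy1 : x1 ≠ y1) (hne : χ s(x1, y1) ≠ χ s(x0, y0)) :
    ∃ p q r : Fin N, P p ∧ P q ∧ P r ∧ p ≠ q ∧ p ≠ r ∧ q ≠ r ∧
      χ s(p, q) ≠ χ s(p, r) := by
  have sw : ∀ x y : Fin N, χ s(x, y) = χ s(y, x) := fun x y => by
    rw [Sym2.eq_swap]
  by_cases e1 : x1 = x0
  · subst e1
    refine ⟨x1, y1, y0, h1, h1', h0', hxy1, ?_, ?_, ?_⟩ <;> try assumption
    rintro rfl; exact hne rfl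
  by_cases e2 : x1 = y0
  · subst e2
    refine ⟨x1, y1, x0, h1, h1', h0, hxy1, ?_, ?_, ?_⟩ <;> try assumption
    · rintro rfl; exact hne (sw x1 y1)
    · rw [sw x1 x0]; exact hne
  by_cases e3 : y1 = x0
  · subst e3
    refine ⟨y1, x1, y0, h1', h1, h0', Ne.symm hxy1, ?_, ?_, ?_⟩ <;> try assumption
    rw [sw y1 x1]; exact hne
  by_cases e4 : y1 = y0
  · subst e4
    refine ⟨y1, x1, x0, h1', h1, h0, Ne.symm hxy1, ?_, ?_, ?_⟩ <;> try assumption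
    rw [sw y1 x1, sw y1 x0]; exact hne
  · by_cases e5 : χ s(x0, x1) = χ s(x0, y0)
    · refine ⟨x1, y1, x0, h1, h1', h0, hxy1, e1, e3, ?_⟩
      rw [← sw x0 x1, e5]; exact hne
    · exact ⟨x0, y0, x1, h0, h0', h1, hxy0, Ne.symm e1, fun h => e2 h.symm,
        fun h => e5 h.symm⟩

theorem stmt14 (n : ℕ) (hn : 7 ≤ n) (χ : Sym2 (Fin n) → ZMod 3)
    (hC : ∃ a b c d : Fin n, IsAltC4 χ a b c d ∧ ¬ MonoOutside χ a b c d) :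
    ∃ a b c d : Fin n, IsAltC4 χ a b c d ∧
      ∃ u : Fin n, (u = a ∨ u = b ∨ u = c ∨ u = d) ∧
        ∃ v w : Fin n,
          v ≠ a ∧ v ≠ b ∧ v ≠ c ∧ v ≠ d ∧
          w ≠ a ∧ w ≠ b ∧ w ≠ c ∧ w ≠ d ∧ v ≠ w ∧
          χ s(u, v) ≠ χ s(u, w) := by
  obtain ⟨a, b, c, d, hAlt, hMono⟩ := hC
  unfold MonoOutside at hMono
  push_neg at hMono
  obtain ⟨x0, y0, hx0a, hx0b, hx0c, hx0d, hy0a, hy0b, hy0c, hy0d, hx0y0, _⟩ :=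
    hMono 0
  obtain ⟨x1, y1, hx1a, hx1b, hx1c, hx1d, hy1a, hy1b, hy1c, hy1d, hx1y1, hne⟩ :=
    hMono (χ s(x0, y0))
  obtain ⟨p, q, r, ⟨hpa, hpb, hpc, hpd⟩, ⟨hqa, hqb, hqc, hqd⟩,
      ⟨hra, hrb, hrc, hrd⟩, hpq, hpr, hqr, hcol⟩ :=
    cherry χ (fun x => x ≠ a ∧ x ≠ b ∧ x ≠ c ∧ x ≠ d) x0 y0 x1 y1
      ⟨hx0a, hx0b, hx0c, hx0d⟩ ⟨hy0a, hy0b, hy0c, hy0d⟩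
      ⟨hx1a, hx1b, hx1c, hx1d⟩ ⟨hy1a, hy1b, hy1c, hy1d⟩ hx0y0 hx1y1 hne
  obtain ⟨hnd, halt⟩ := hAlt
  have hab : a ≠ b := by rintro rfl; simp at hnd
  have hac : a ≠ c := by rintro rfl; simp at hnd
  have had : a ≠ d := by rintro rfl; simp at hnd
  have hbc : b ≠ c := by rintro rfl; simp at hnd
  have hbd : b ≠ d := by rintro rfl; simp at hnd
  have hcd : c ≠ d := by rintro rfl; simp at hnd
  by_cases h1 : χ s(p, b) + χ s(c, d) = χ s(b, c) + χ s(d, p)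
  · -- then a b p d is alternating
    refine ⟨a, b, p, d, ⟨?_, ?_⟩, p, Or.inr (Or.inr (Or.inl rfl)),
      q, r, hqa, hqb, hpq.symm, hqd, hra, hrb, hpr.symm, hrd, hqr, hcol⟩
    · simp [hab, Ne.symm hpa, had, Ne.symm hpb, hbd, hpd]
    · intro h2
      apply halt
      have e1 : χ s(p, b) + χ s(c, d) = χ s(b, c) + χ s(p, d) := by
        rw [show s(p, d) = s(d, p) from Sym2.eq_swap]; exact h1
      have e2 : χ s(a, b) + χ s(p, d) = χ s(p, b) + χ s(d, a) := by
        rw [show s(p, b) = s(b, p) from Sym2.eq_swap]; exact h2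
      linear_combination e1 + e2
  · -- p b c d is alternating
    exact ⟨p, b, c, d, ⟨by simp [hpb, hpc, hpd, hbc, hbd, hcd], h1⟩,
      p, Or.inl rfl,
      q, r, hpq.symm, hqb, hqc, hqd, hpr.symm, hrb, hrc, hrd, hqr, hcol⟩
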